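/- Let a, b, n be positive integers. Then a^{<n>} + b^{<n>} > (a+b)^{<n>}, where for a positive integer h with n-th binomial representation h = Σ_{j=i}^{n} C(h(j)+j, j), one defines h^{<n>} = Σ_{j=i}^{n} C(h(j)+j+1, j). -/
import Mathlib


open Finset

/-- Monomials of `K[x_1,…,x_n]` are encoded as exponent vectors `Fin n → ℕ`.
`mulVarsOn S W = {x_j · w : w ∈ W, j ∈ S}`. -/
def mulVarsOn {n : ℕ} (S : Finset (Fin n)) (W : Finset (Fin n → ℕ)) :
    Finset (Fin n → ℕ) :=
  W.biUnion fun v => S.image fun j => v + Pi.single j 1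

/-- `MV = {x_j · v : v ∈ V, 1 ≤ j ≤ n}`. -/
def mulVars {n : ℕ} (W : Finset (Fin n → ℕ)) : Finset (Fin n → ℕ) :=
  mulVarsOn Finset.univ W

/-- `IsBinRep m h p f` says that `h = ∑_{j=p}^{m} C(f j + j, j)` is the `m`-th
binomial representation of `h`: `1 ≤ p ≤ m` and `f` is weakly increasing on `[p,m]`. -/
def IsBinRep (m h p : ℕ) (f : ℕ → ℕ) : Prop :=
  1 ≤ p ∧ p ≤ m ∧ (∀ j k, p ≤ j → j ≤ k → k ≤ m → f j ≤ f k) ∧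
    h = ∑ j ∈ Finset.Icc p m, Nat.choose (f j + j) j

/-- `h^{<m>} = ∑_{j=p}^{m} C(f j + j + 1, j)` for the `m`-th binomial representation `(p, f)`. -/
def upVal (m p : ℕ) (f : ℕ → ℕ) : ℕ :=
  ∑ j ∈ Finset.Icc p m, Nat.choose (f j + j + 1) j

/-- `h_{<<m>>} = ∑_{j=p}^{m} C(f j + j - 1, j - 1)` for the `m`-th binomial representation `(p, f)`. -/
def downVal (m p : ℕ) (f : ℕ → ℕ) : ℕ :=
  ∑ j ∈ Finset.Icc p m, Nat.choose (f j + j - 1) (j - 1)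

/-- `W` is a Gotzmann set with respect to the set of variables `S`:
either `W = ∅`, or (in at most one variable) `|SW| = |W|`, or
`|SW| = |W|^{<|S|-1>}` computed from the `(|S|-1)`-th binomial representation of `|W|`. -/
def IsGotzmannOn {n : ℕ} (S : Finset (Fin n)) (W : Finset (Fin n → ℕ)) : Prop :=
  W = ∅ ∨ (S.card ≤ 1 ∧ (mulVarsOn S W).card = W.card) ∨
    ∃ p f, IsBinRep (S.card - 1) W.card p f ∧
      (mulVarsOn S W).card = upVal (S.card - 1) p f

/-- `V` is a Gotzmann set of monomials of `K[x_1,…,x_n]`: `|MV| = |V|^{<n-1>}`. -/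
def IsGotzmann {n : ℕ} (W : Finset (Fin n → ℕ)) : Prop :=
  IsGotzmannOn Finset.univ W

/-- The exponent vector of `gcd(V)` (pointwise minimum of the exponent vectors). -/
noncomputable def gcdMon {n : ℕ} (V : Finset (Fin n → ℕ)) : Fin n → ℕ :=
  fun j => sInf ((fun v => v j) '' (V : Set (Fin n → ℕ)))

/-- `w` comes strictly earlier than `v` in the lexicographic order on monomials
(`x_1 > x_2 > … > x_n`, larger exponent vector comes earlier). -/
def lexEarlier {n : ℕ} (w v : Fin n → ℕ) : Prop :=
  ∃ i : Fin n, (∀ j, j < i → w j = v j) ∧ v i < w i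

/-- `V` is a lexsegment set of monomials of degree `d`: an initial segment of
the monomials of degree `d` in lexicographic order. -/
def IsLexSegment (n d : ℕ) (V : Finset (Fin n → ℕ)) : Prop :=
  (∀ v ∈ V, ∑ j, v j = d) ∧
    ∀ v ∈ V, ∀ w : Fin n → ℕ, (∑ j, w j = d) → lexEarlier w v → w ∈ V

/-- `V` is strongly stable: for `u ∈ V`, `i < j` with `x_j ∣ u`, also `(x_i/x_j)·u ∈ V`. -/
def IsStronglyStable {n : ℕ} (V : Finset (Fin n → ℕ)) : Prop :=
  ∀ u ∈ V, ∀ i j : Fin n, i < j → 0 < u j →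
    (u + Pi.single i 1 - Pi.single j 1) ∈ V

/-- `u` is a fixed empty element of `V` (of degree `d`) for `i`: no monomial of
degree `d` which is under `u` for `i` (all exponents except possibly the `i`-th
bounded by those of `u`) belongs to `V`. -/
def IsFEE (n d : ℕ) (V : Finset (Fin n → ℕ)) (i : Fin n) (u : Fin n → ℕ) : Prop :=
  u ∉ V ∧ ∀ v : Fin n → ℕ, (∑ j, v j = d) → (∀ j, j ≠ i → v j ≤ u j) → v ∉ V

namespace BinRepAux

/-- `T n g = C(g+n, n)`, the number of monomials of degree ≤ g in n variables. -/
def T (n g : ℕ) : ℕ := Nat.choose (g + n) n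

/-- greedy top entry of the `n`-th binomial representation of `h`. -/
def gam (n h : ℕ) : ℕ := Nat.findGreatest (fun g => T n g ≤ h) h

def U : ℕ → ℕ → ℕ
  | _, 0 => 0
  | 0, h + 1 => h + 1
  | n + 1, h + 1 =>
      T (n + 1) (gam (n + 1) (h + 1) + 1) +
        U n (h + 1 - T (n + 1) (gam (n + 1) (h + 1)))

lemma T_zero (n : ℕ) : T n 0 = 1 := by simp [T]

lemma T_succ (m e : ℕ) : T (m + 1) (e + 1) = T (m + 1) e + T m (e + 1) := by
  unfold T
  have h1 : e + 1 + (m + 1) = (e + m + 1) + 1 := by omega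
  have h2 : e + (m + 1) = e + m + 1 := by omega
  have h3 : e + 1 + m = e + m + 1 := by omega
  rw [h1, h2, h3, Nat.choose_succ_succ (e + m + 1) m]
  simp only [Nat.succ_eq_add_one]
  omega

lemma T_pos (n g : ℕ) : 0 < T n g := Nat.choose_pos (by omega)

lemma T_mono (n : ℕ) {e e' : ℕ} (h : e ≤ e') : T n e ≤ T n e' :=
  Nat.choose_le_choose n (by omega)

lemma T_lt (m : ℕ) {e e' : ℕ} (h : e < e') : T (m + 1) e < T (m + 1) e' := by
  have h1 : T (m + 1) (e + 1) ≤ T (m + 1) e' := T_mono _ (by omega)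
  have := T_succ m e
  have := T_pos m (e + 1)
  omega

lemma T_ge (m g : ℕ) : g + 1 ≤ T (m + 1) g := by
  induction g with
  | zero => simp [T_zero]
  | succ g ih =>
    have := T_succ m g
    have := T_pos m (g + 1)
    omega

lemma T_one (n : ℕ) : T n 1 = n + 1 := by
  unfold T
  rw [Nat.add_comm 1 n, Nat.choose_succ_self_right]

lemma T_level1 (g : ℕ) : T 1 g = g + 1 := by
  simp [T, Nat.choose_one_right]

lemma gam_le {m h : ℕ} (hh : 1 ≤ h) : T (m + 1) (gam (m + 1) h) ≤ h :=
  Nat.findGreatest_spec (P := fun g => T (m + 1) g ≤ h) (m := 0) (by omega)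
    (by simpa [T_zero] using hh)

lemma gam_lt {m h : ℕ} (hh : 1 ≤ h) : h < T (m + 1) (gam (m + 1) h + 1) := by
  by_contra hc
  push_neg at hc
  have hb : gam (m + 1) h + 1 ≤ h := by
    have := T_ge m (gam (m + 1) h + 1)
    omega
  exact Nat.findGreatest_is_greatest (P := fun g => T (m + 1) g ≤ h)
    (Nat.lt_succ_self _) hb hc

lemma gam_eq {m h e : ℕ} (h1 : T (m + 1) e ≤ h) (h2 : h < T (m + 1) (e + 1)) :
    gam (m + 1) h = e := by
  have hh : 1 ≤ h := le_trans (T_pos (m + 1) e) h1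
  have hge : e ≤ gam (m + 1) h := by
    apply Nat.le_findGreatest (P := fun g => T (m + 1) g ≤ h) _ h1
    have := T_ge m e; omega
  have hle : gam (m + 1) h ≤ e := by
    by_contra hc
    push_neg at hc
    have : T (m + 1) (e + 1) ≤ T (m + 1) (gam (m + 1) h) := T_mono _ (by omega)
    have := gam_le (m := m) hh
    omega
  omega

lemma U_zero (n : ℕ) : U n 0 = 0 := by cases n <;> rfl

lemma U_zero_arg (h : ℕ) : U 0 h = h := by cases h <;> rfl

lemma U_unfold {m h : ℕ} (hh : 1 ≤ h) :
    U (m + 1) h =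
      T (m + 1) (gam (m + 1) h + 1) + U m (h - T (m + 1) (gam (m + 1) h)) := by
  obtain ⟨k, rfl⟩ : ∃ k, h = k + 1 := ⟨h - 1, by omega⟩
  rfl

lemma U_succ_block {m e r : ℕ} (h2 : T (m + 1) e + r < T (m + 1) (e + 1)) :
    U (m + 1) (T (m + 1) e + r) = T (m + 1) (e + 1) + U m r := by
  have hpos : 1 ≤ T (m + 1) e + r := by have := T_pos (m + 1) e; omega
  have hg : gam (m + 1) (T (m + 1) e + r) = e := gam_eq (by omega) h2
  rw [U_unfold hpos, hg]
  congr 1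
  congr 1
  omega

lemma U_T (n g : ℕ) : U n (T n g) = T n (g + 1) := by
  cases n with
  | zero =>
    have h1 : T 0 g = 1 := by simp [T]
    have h2 : T 0 (g + 1) = 1 := by simp [T]
    rw [h1, h2]; rfl
  | succ m =>
    have := U_succ_block (m := m) (e := g) (r := 0) (by simpa using T_lt m (Nat.lt_succ_self g))
    simpa [U_zero] using this

lemma U_block {m e r : ℕ} (h2 : T (m + 1) e + r ≤ T (m + 1) (e + 1)) :
    U (m + 1) (T (m + 1) e + r) = T (m + 1) (e + 1) + U m r := by
  rcases lt_or_eq_of_le h2 with h | h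
  · exact U_succ_block h
  · have hr : r = T m (e + 1) := by have := T_succ m e; omega
    subst hr
    rw [h, U_T, U_T, T_succ m (e + 1)]

lemma U_one (n : ℕ) : U n 1 = n + 1 := by
  have := U_T n 0
  rwa [T_zero, T_one] at this

lemma U1 {h : ℕ} (hh : 1 ≤ h) : U 1 h = h + 1 := by
  have h1 : T 1 (h - 1) = h := by rw [T_level1]; omega
  have h2 : T 1 (h - 1 + 1) = h + 1 := by rw [T_level1]; omega
  have := U_succ_block (m := 0) (e := h - 1) (r := 0)
    (by simp only [Nat.zero_add, T_level1]; omega)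
  rw [h1, h2] at this
  simpa [U_zero] using this

/-! ### The main inequality bundle -/

def PA (n : ℕ) : Prop := ∀ a b, 1 ≤ a → 1 ≤ b → U n (a + b) + 1 ≤ U n a + U n b

def PM (n : ℕ) : Prop := ∀ δ x y w, 1 ≤ x → 1 ≤ y → x ≤ T n δ → y ≤ T n δ →
  x + y = T n δ + w → T n (δ + 1) + U n w ≤ U n x + U n y

def PM0 (n : ℕ) : Prop := ∀ δ x y, 1 ≤ x → 1 ≤ y → x + y = T n δ →
  T n (δ + 1) + 1 ≤ U n x + U n y

def PB (n : ℕ) : Prop := ∀ h, 1 ≤ h → U n h + 1 ≤ U (n + 1) h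

lemma pa_weak {n : ℕ} (pa : PA n) : ∀ a b, U n (a + b) ≤ U n a + U n b := by
  intro a b
  rcases Nat.eq_zero_or_pos a with rfl | ha
  · simp [U_zero]
  rcases Nat.eq_zero_or_pos b with rfl | hb
  · simp [U_zero]
  have := pa a b ha hb
  omega

lemma PA_one : PA 1 := by
  intro a b ha hb
  rw [U1 (by omega), U1 ha, U1 hb]
  omega

lemma PM_one : PM 1 := by
  intro δ x y w hx hy hxT hyT hsum
  rw [T_level1] at hxT hyT hsum
  have h1 : T 1 (δ + 1) = δ + 2 := by rw [T_level1]
  rw [h1, U1 hx, U1 hy]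
  rcases Nat.eq_zero_or_pos w with rfl | hw
  · rw [U_zero]; omega
  · rw [U1 hw]; omega

lemma PM0_one : PM0 1 := by
  intro δ x y hx hy hsum
  rw [T_level1] at hsum
  have h1 : T 1 (δ + 1) = δ + 2 := by rw [T_level1]
  rw [h1, U1 hx, U1 hy]
  omega

lemma T_succ2 (m e : ℕ) : T (m + 2) (e + 1) = T (m + 2) e + T (m + 1) (e + 1) :=
  T_succ (m + 1) e

lemma TEL (m : ℕ) (pa : PA (m + 1)) :
    ∀ γ x, U (m + 1) (T (m + 2) γ + x) + 1 ≤ T (m + 2) (γ + 1) + U (m + 1) x := by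
  intro γ
  induction γ with
  | zero =>
    intro x
    have h0 : T (m + 2) 0 = 1 := T_zero _
    have h1 : T (m + 2) 1 = m + 3 := T_one _
    have h2 : U (m + 1) 1 = m + 2 := U_one _
    rw [h0, h1]
    rcases Nat.eq_zero_or_pos x with rfl | hx
    · simp only [Nat.add_zero, U_zero, h2]
      omega
    · have hpa := pa 1 x (by omega) hx
      rw [h2] at hpa
      omega
  | succ γ ih =>
    intro x
    have hTs : T (m + 2) (γ + 1) = T (m + 2) γ + T (m + 1) (γ + 1) := T_succ2 m γ
    have hsplit : T (m + 2) (γ + 1) + x = T (m + 2) γ + (T (m + 1) (γ + 1) + x) := by omega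
    rw [hsplit]
    have h1 := ih (T (m + 1) (γ + 1) + x)
    have hUT : U (m + 1) (T (m + 1) (γ + 1)) = T (m + 1) (γ + 1 + 1) := U_T _ _
    have hT2 : T (m + 2) (γ + 1 + 1) = T (m + 2) (γ + 1) + T (m + 1) (γ + 1 + 1) :=
      T_succ2 m (γ + 1)
    rcases Nat.eq_zero_or_pos x with rfl | hx
    · simp only [Nat.add_zero] at h1 ⊢
      rw [hUT] at h1
      rw [U_zero]
      omega
    · have hpa := pa (T (m + 1) (γ + 1)) x (T_pos _ _) hx
      rw [hUT] at hpa
      omega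

lemma PB_step (m : ℕ) (pa : PA (m + 1)) : PB (m + 1) := by
  intro h hh
  show U (m + 1) h + 1 ≤ U (m + 2) h
  set γ := gam (m + 2) h with hγ
  have hle : T (m + 2) γ ≤ h := gam_le hh
  have hlt : h < T (m + 2) (γ + 1) := gam_lt hh
  obtain ⟨r, hr⟩ : ∃ r, h = T (m + 2) γ + r := ⟨h - T (m + 2) γ, by omega⟩
  have hblock : T (m + 2) γ + r < T (m + 2) (γ + 1) := by omega
  have hU : U (m + 2) h = T (m + 2) (γ + 1) + U (m + 1) r := by
    rw [hr]; exact U_succ_block hblock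
  have := TEL m pa γ r
  rw [← hr] at this
  omega

lemma AINIT (m : ℕ) (pa : PA (m + 1)) :
    ∀ t j, T (m + 2) (j + 1) + U (m + 1) t ≤ U (m + 2) (T (m + 2) j + t) := by
  intro t
  induction t using Nat.strong_induction_on with
  | _ t IH =>
    intro j
    have hTs : T (m + 2) (j + 1) = T (m + 2) j + T (m + 1) (j + 1) := T_succ2 m j
    by_cases ht : t ≤ T (m + 1) (j + 1)
    · have hb : T (m + 2) j + t ≤ T (m + 2) (j + 1) := by omega
      have heq : U (m + 2) (T (m + 2) j + t) = T (m + 2) (j + 1) + U (m + 1) t :=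
        U_block hb
      omega
    · push_neg at ht
      have hL : 1 ≤ T (m + 1) (j + 1) := T_pos _ _
      obtain ⟨t', ht'⟩ : ∃ t', t = T (m + 1) (j + 1) + t' := ⟨t - T (m + 1) (j + 1), by omega⟩
      have hsplit : T (m + 2) j + t = T (m + 2) (j + 1) + t' := by omega
      have hIH := IH t' (by omega) (j + 1)
      have hT2 : T (m + 2) (j + 1 + 1) = T (m + 2) (j + 1) + T (m + 1) (j + 1 + 1) :=
        T_succ2 m (j + 1)
      have hUT : U (m + 1) (T (m + 1) (j + 1)) = T (m + 1) (j + 1 + 1) := U_T _ _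
      have hpa := pa (T (m + 1) (j + 1)) t' hL (by omega)
      rw [← ht'] at hpa
      rw [hsplit]
      omega

lemma STAR (m : ℕ) (pa : PA (m + 1)) (pm : PM (m + 1)) (pb : PB (m + 1)) :
    ∀ s δ w, 1 ≤ δ → s ≤ T (m + 1) δ → w + s ≤ T (m + 2) δ →
      T (m + 1) (δ + 1) + U (m + 2) w ≤ U (m + 2) (w + s) + U (m + 1) (T (m + 1) δ - s) := by
  intro s
  induction s using Nat.strong_induction_on with
  | _ s IH =>
    intro δ w hδ hs hws
    rcases Nat.eq_zero_or_pos s with rfl | hs1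
    · simp only [Nat.add_zero, Nat.sub_zero]
      rw [U_T]
      omega
    rcases Nat.eq_zero_or_pos w with rfl | hw1
    · -- w = 0
      rw [Nat.zero_add, U_zero]
      rcases eq_or_lt_of_le hs with hseq | hslt
      · -- s = T (m+1) δ
        have h1 : U (m + 1) (T (m + 1) δ) + 1 ≤ U (m + 2) (T (m + 1) δ) :=
          pb (T (m + 1) δ) (T_pos _ _)
        have h2 : U (m + 1) (T (m + 1) δ) = T (m + 1) (δ + 1) := U_T _ _
        rw [hseq, Nat.sub_self, U_zero]
        omega
      · -- s < T (m+1) δ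
        have h1 : U (m + 1) s + 1 ≤ U (m + 2) s := pb s hs1
        have h2 := pa s (T (m + 1) δ - s) hs1 (by omega)
        have h3 : s + (T (m + 1) δ - s) = T (m + 1) δ := by omega
        rw [h3] at h2
        have h4 : U (m + 1) (T (m + 1) δ) = T (m + 1) (δ + 1) := U_T _ _
        omega
    · -- w ≥ 1
      have hle : T (m + 2) (gam (m + 2) w) ≤ w := gam_le hw1
      have hlt : w < T (m + 2) (gam (m + 2) w + 1) := gam_lt hw1
      set e := gam (m + 2) w with he
      have he1 : e + 1 ≤ δ := by
        by_contra hc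
        push_neg at hc
        have : T (m + 2) δ ≤ T (m + 2) e := T_mono _ (by omega)
        omega
      obtain ⟨ρ, hρ⟩ : ∃ ρ, w = T (m + 2) e + ρ := ⟨w - T (m + 2) e, by omega⟩
      have hblw : T (m + 2) e + ρ < T (m + 2) (e + 1) := by omega
      have hUw : U (m + 2) w = T (m + 2) (e + 1) + U (m + 1) ρ := by
        rw [hρ]; exact U_succ_block hblw
      have hTse : T (m + 2) (e + 1) = T (m + 2) e + T (m + 1) (e + 1) := T_succ2 m e
      by_cases hc1 : w + s ≤ T (m + 2) (e + 1)
      · -- C1 : window within block e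
        have hws' : w + s = T (m + 2) e + (ρ + s) := by omega
        have hbl2 : T (m + 2) e + (ρ + s) ≤ T (m + 2) (e + 1) := by omega
        have hUws : U (m + 2) (w + s) = T (m + 2) (e + 1) + U (m + 1) (ρ + s) := by
          rw [hws']; exact U_block hbl2
        have hρs : ρ + s ≤ T (m + 1) (e + 1) := by omega
        have hmono : T (m + 1) (e + 1) ≤ T (m + 1) δ := T_mono _ he1
        rcases Nat.eq_zero_or_pos (T (m + 1) δ - s) with hy0 | hy1
        · -- s = T (m+1) δ, forces ρ = 0 and δ = e + 1
          have hsT : s = T (m + 1) δ := by omega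
          have hρ0 : ρ = 0 := by omega
          have hδe : δ = e + 1 := by
            by_contra hne
            have : T (m + 1) (e + 1) < T (m + 1) δ := T_lt _ (by omega)
            omega
          subst hδe
          have hws2 : w + s = T (m + 2) (e + 1) := by omega
          have hU2 : U (m + 2) (T (m + 2) (e + 1)) = T (m + 2) (e + 1 + 1) := U_T _ _
          have hT3 : T (m + 2) (e + 1 + 1) = T (m + 2) (e + 1) + T (m + 1) (e + 1 + 1) :=
            T_succ2 m (e + 1)
          have hmono2 : T (m + 1) (e + 1 + 1) ≤ T (m + 1) (e + 1 + 1) := le_refl _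
          rw [hws2, hU2, hy0, U_zero]
          rw [hρ0, U_zero] at hUw
          omega
        · -- main sub-case: apply PM at level m+1
          have hpm := pm δ (ρ + s) (T (m + 1) δ - s) ρ (by omega) hy1
            (by omega) (by omega) (by omega)
          have hUT : U (m + 1) (T (m + 1) δ) = T (m + 1) (δ + 1) := U_T _ _
          omega
      · -- C2 : window crosses the end of block e
        push_neg at hc1
        obtain ⟨s1, hs1def⟩ : ∃ s1, w + s1 = T (m + 2) (e + 1) :=
          ⟨T (m + 2) (e + 1) - w, by omega⟩
        have hs1pos : 1 ≤ s1 := by omega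
        have hs1lt : s1 < s := by omega
        obtain ⟨s2, hs2def⟩ : ∃ s2, s = s1 + s2 := ⟨s - s1, by omega⟩
        have hs2pos : 1 ≤ s2 := by omega
        -- piece A : induction hypothesis for s1
        have hA := IH s1 hs1lt δ w hδ (by omega) (by omega)
        -- piece B : AINIT from the aligned point
        have hB := AINIT m pa s2 (e + 1)
        have hws2 : w + s = T (m + 2) (e + 1) + s2 := by omega
        have hUws1 : U (m + 2) (T (m + 2) (e + 1)) = T (m + 2) (e + 1 + 1) := U_T _ _
        rw [← hs1def] at hUws1
        -- piece C : subadditivity for the complement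
        have hsplitC : T (m + 1) δ - s1 = (T (m + 1) δ - s) + s2 := by omega
        have hC : U (m + 1) (T (m + 1) δ - s1) ≤
            U (m + 1) (T (m + 1) δ - s) + U (m + 1) s2 := by
          rw [hsplitC]
          exact pa_weak pa _ _
        rw [hws2]
        omega

lemma PM_step (m : ℕ) (pa1 : PA (m + 1)) (pm1 : PM (m + 1)) (pb : PB (m + 1)) :
    PM (m + 2) := by
  have star := STAR m pa1 pm1 pb
  -- helper, assuming x ≤ y
  have key : ∀ δ x y w, 1 ≤ x → 1 ≤ y → x ≤ y → x ≤ T (m + 2) δ → y ≤ T (m + 2) δ →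
      x + y = T (m + 2) δ + w → T (m + 2) (δ + 1) + U (m + 2) w ≤ U (m + 2) x + U (m + 2) y := by
    intro δ
    induction δ with
    | zero =>
      intro x y w hx hy hxy hxT hyT hsum
      have h0 : T (m + 2) 0 = 1 := T_zero _
      have hx1 : x = 1 := by omega
      have hy1 : y = 1 := by omega
      have hw : w = 1 := by omega
      subst hx1; subst hy1; subst hw
      have h1 : U (m + 2) 1 = m + 3 := U_one _
      have h2 : T (m + 2) (0 + 1) = m + 3 := by rw [Nat.zero_add]; exact T_one _
      omega
    | succ δ ih =>
      intro x y w hx hy hxy hxT hyT hsum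
      have hTs : T (m + 2) (δ + 1) = T (m + 2) δ + T (m + 1) (δ + 1) := T_succ2 m δ
      have hTs2 : T (m + 2) (δ + 1 + 1) = T (m + 2) (δ + 1) + T (m + 1) (δ + 1 + 1) :=
        T_succ2 m (δ + 1)
      rcases eq_or_lt_of_le hyT with hyeq | hylt
      · -- y = T (m+2) (δ+1), so w = x
        have hwx : w = x := by omega
        have hUy : U (m + 2) y = T (m + 2) (δ + 1 + 1) := by rw [hyeq]; exact U_T _ _
        subst hwx
        omega
      · -- s ≥ 1 where y + s = T (m+2) (δ+1)
        obtain ⟨s, hsdef⟩ : ∃ s, y + s = T (m + 2) (δ + 1) := ⟨T (m + 2) (δ + 1) - y, by omega⟩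
        have hs1 : 1 ≤ s := by omega
        have hxws : x = w + s := by omega
        by_cases hy' : T (m + 2) δ ≤ y
        · -- case (i): y lies in the top block
          obtain ⟨rem, hrem⟩ : ∃ rem, y = T (m + 2) δ + rem := ⟨y - T (m + 2) δ, by omega⟩
          have hrems : rem + s = T (m + 1) (δ + 1) := by omega
          have hbl : T (m + 2) δ + rem < T (m + 2) (δ + 1) := by omega
          have hUy : U (m + 2) y = T (m + 2) (δ + 1) + U (m + 1) rem := by
            rw [hrem]; exact U_succ_block hbl
          have hstar := star s (δ + 1) w (by omega) (by omega) (by omega)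
          have hrs : T (m + 1) (δ + 1) - s = rem := by omega
          rw [hrs, ← hxws] at hstar
          omega
        · -- case (ii): y below the top block, recurse
          push_neg at hy'
          have hih := ih x y (w + T (m + 1) (δ + 1)) hx hy hxy (by omega) (by omega) (by omega)
          have hstar := star (T (m + 1) (δ + 1)) (δ + 1) w (by omega) (le_refl _) (by omega)
          rw [Nat.sub_self, U_zero] at hstar
          omega
  intro δ x y w hx hy hxT hyT hsum
  rcases le_total x y with hxy | hyx
  · exact key δ x y w hx hy hxy hxT hyT hsum
  · have := key δ y x w hy hx hyx hyT hxT (by omega)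
    omega

lemma PM0_step (m : ℕ) (pa1 : PA (m + 1)) (pb : PB (m + 1)) (pm2 : PM (m + 2)) :
    PM0 (m + 2) := by
  have key : ∀ δ x y, 1 ≤ x → 1 ≤ y → x ≤ y → x + y = T (m + 2) δ →
      T (m + 2) (δ + 1) + 1 ≤ U (m + 2) x + U (m + 2) y := by
    intro δ x y hx hy hxy hsum
    rcases Nat.eq_zero_or_pos δ with rfl | hδ
    · have h0 : T (m + 2) 0 = 1 := T_zero _
      omega
    obtain ⟨δ', rfl⟩ : ∃ δ', δ = δ' + 1 := ⟨δ - 1, by omega⟩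
    have hTs : T (m + 2) (δ' + 1) = T (m + 2) δ' + T (m + 1) (δ' + 1) := T_succ2 m δ'
    have hTs2 : T (m + 2) (δ' + 1 + 1) = T (m + 2) (δ' + 1) + T (m + 1) (δ' + 1 + 1) :=
      T_succ2 m (δ' + 1)
    by_cases hy' : T (m + 2) δ' ≤ y
    · -- case (i)
      obtain ⟨rem, hrem⟩ : ∃ rem, y = T (m + 2) δ' + rem := ⟨y - T (m + 2) δ', by omega⟩
      have hbl : T (m + 2) δ' + rem < T (m + 2) (δ' + 1) := by omega
      have hUy : U (m + 2) y = T (m + 2) (δ' + 1) + U (m + 1) rem := by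
        rw [hrem]; exact U_succ_block hbl
      have hxrem : x + rem = T (m + 1) (δ' + 1) := by omega
      have hpbx : U (m + 1) x + 1 ≤ U (m + 2) x := pb x hx
      rcases Nat.eq_zero_or_pos rem with hrem0 | hrem1
      · -- x = T (m+1) (δ'+1)
        have hxT : x = T (m + 1) (δ' + 1) := by omega
        have hUT : U (m + 1) (T (m + 1) (δ' + 1)) = T (m + 1) (δ' + 1 + 1) := U_T _ _
        rw [hxT] at hpbx
        rw [hUT] at hpbx
        rw [← hxT] at hpbx
        rw [hrem0, U_zero] at hUy
        omega
      · have hpa := pa1 x rem hx hrem1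
        rw [hxrem] at hpa
        have hUT : U (m + 1) (T (m + 1) (δ' + 1)) = T (m + 1) (δ' + 1 + 1) := U_T _ _
        rw [hUT] at hpa
        omega
    · -- case (ii)
      push_neg at hy'
      have hpm := pm2 δ' x y (T (m + 1) (δ' + 1)) hx hy (by omega) (by omega) (by omega)
      have hpb2 : U (m + 1) (T (m + 1) (δ' + 1)) + 1 ≤ U (m + 2) (T (m + 1) (δ' + 1)) :=
        pb _ (T_pos _ _)
      have hUT : U (m + 1) (T (m + 1) (δ' + 1)) = T (m + 1) (δ' + 1 + 1) := U_T _ _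
      rw [hUT] at hpb2
      omega
  intro δ x y hx hy hsum
  rcases le_total x y with hxy | hyx
  · exact key δ x y hx hy hxy hsum
  · have := key δ y x hy hx hyx (by omega)
    omega

lemma PA_step (m : ℕ) (pa1 : PA (m + 1)) (pb : PB (m + 1)) (pm2 : PM (m + 2))
    (pm02 : PM0 (m + 2)) : PA (m + 2) := by
  have caseA : ∀ a b, 1 ≤ a → 1 ≤ b → gam (m + 2) (a + b) = gam (m + 2) a →
      U (m + 2) (a + b) + 1 ≤ U (m + 2) a + U (m + 2) b := by
    intro a b ha hb hg
    have hc1 : (1 : ℕ) ≤ a + b := by omega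
    have hleC : T (m + 2) (gam (m + 2) (a + b)) ≤ a + b := gam_le hc1
    have hltC : a + b < T (m + 2) (gam (m + 2) (a + b) + 1) := gam_lt hc1
    have hleA : T (m + 2) (gam (m + 2) a) ≤ a := gam_le ha
    rw [← hg] at hleA
    obtain ⟨γ, hγ⟩ : ∃ γ, gam (m + 2) (a + b) = γ := ⟨_, rfl⟩
    rw [hγ] at hleC hltC hleA
    obtain ⟨ra, hra⟩ : ∃ ra, a = T (m + 2) γ + ra := ⟨a - T (m + 2) γ, by omega⟩
    have hblA : T (m + 2) γ + ra < T (m + 2) (γ + 1) := by omega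
    have hUa : U (m + 2) a = T (m + 2) (γ + 1) + U (m + 1) ra := by
      rw [hra]; exact U_succ_block hblA
    have hblC : T (m + 2) γ + (ra + b) < T (m + 2) (γ + 1) := by omega
    have hUc : U (m + 2) (a + b) = T (m + 2) (γ + 1) + U (m + 1) (ra + b) := by
      have h' : a + b = T (m + 2) γ + (ra + b) := by omega
      rw [h']; exact U_succ_block hblC
    have hpbb : U (m + 1) b + 1 ≤ U (m + 2) b := pb b hb
    rcases Nat.eq_zero_or_pos ra with hra0 | hra1
    · rw [hra0] at hUc hUa
      rw [Nat.zero_add] at hUc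
      rw [U_zero] at hUa
      omega
    · have hpa := pa1 ra b hra1 hb
      omega
  intro a b ha hb
  have hc1 : (1 : ℕ) ≤ a + b := by omega
  have hgam_le : ∀ x, 1 ≤ x → x ≤ a + b → gam (m + 2) x ≤ gam (m + 2) (a + b) := by
    intro x hx hxc
    by_contra hcon
    push_neg at hcon
    have h0 : a + b < T (m + 2) (gam (m + 2) (a + b) + 1) := gam_lt hc1
    have h1 : T (m + 2) (gam (m + 2) (a + b) + 1) ≤ T (m + 2) (gam (m + 2) x) :=
      T_mono _ (by omega)
    have h2 : T (m + 2) (gam (m + 2) x) ≤ x := gam_le hx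
    omega
  by_cases hga : gam (m + 2) a = gam (m + 2) (a + b)
  · exact caseA a b ha hb hga.symm
  · by_cases hgb : gam (m + 2) b = gam (m + 2) (a + b)
    · have hcomm : b + a = a + b := Nat.add_comm b a
      have hkey := caseA b a hb ha (by rw [hcomm]; exact hgb.symm)
      rw [hcomm] at hkey
      omega
    · -- case B : both tops below γ
      have hleC : T (m + 2) (gam (m + 2) (a + b)) ≤ a + b := gam_le hc1
      have hltC : a + b < T (m + 2) (gam (m + 2) (a + b) + 1) := gam_lt hc1
      have hga' : gam (m + 2) a < gam (m + 2) (a + b) :=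
        lt_of_le_of_ne (hgam_le a ha (by omega)) hga
      have hgb' : gam (m + 2) b < gam (m + 2) (a + b) :=
        lt_of_le_of_ne (hgam_le b hb (by omega)) hgb
      have haT : a < T (m + 2) (gam (m + 2) (a + b)) := by
        have h1 : a < T (m + 2) (gam (m + 2) a + 1) := gam_lt ha
        have h2 : T (m + 2) (gam (m + 2) a + 1) ≤ T (m + 2) (gam (m + 2) (a + b)) :=
          T_mono _ (by omega)
        omega
      have hbT : b < T (m + 2) (gam (m + 2) (a + b)) := by
        have h1 : b < T (m + 2) (gam (m + 2) b + 1) := gam_lt hb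
        have h2 : T (m + 2) (gam (m + 2) b + 1) ≤ T (m + 2) (gam (m + 2) (a + b)) :=
          T_mono _ (by omega)
        omega
      obtain ⟨γ, hγ⟩ : ∃ γ, gam (m + 2) (a + b) = γ := ⟨_, rfl⟩
      rw [hγ] at hleC hltC haT hbT
      obtain ⟨r, hr⟩ : ∃ r, a + b = T (m + 2) γ + r := ⟨a + b - T (m + 2) γ, by omega⟩
      rcases Nat.eq_zero_or_pos r with hr0 | hr1
      · have hpm0 := pm02 γ a b ha hb (by omega)
        have hUc : U (m + 2) (a + b) = T (m + 2) (γ + 1) := by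
          rw [hr, hr0]
          simp only [Nat.add_zero]
          exact U_T _ _
        omega
      · have hpm := pm2 γ a b r ha hb (by omega) (by omega) hr
        have hpbr : U (m + 1) r + 1 ≤ U (m + 2) r := pb r hr1
        have hblC : T (m + 2) γ + r < T (m + 2) (γ + 1) := by omega
        have hUc : U (m + 2) (a + b) = T (m + 2) (γ + 1) + U (m + 1) r := by
          rw [hr]; exact U_succ_block hblC
        omega

lemma bundle : ∀ m, PA (m + 1) ∧ PM (m + 1) ∧ PM0 (m + 1) := by
  intro m
  induction m with
  | zero => exact ⟨PA_one, PM_one, PM0_one⟩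
  | succ m ih =>
    obtain ⟨pa, pm, pm0⟩ := ih
    have pb := PB_step m pa
    have pm2 := PM_step m pa pm pb
    have pm02 := PM0_step m pa pb pm2
    have pa2 := PA_step m pa pb pm2 pm02
    exact ⟨pa2, pm2, pm02⟩

lemma PA_all {n : ℕ} (hn : 0 < n) : PA n := by
  obtain ⟨m, rfl⟩ : ∃ m, n = m + 1 := ⟨n - 1, by omega⟩
  exact (bundle m).1

lemma sum_choose (g k : ℕ) :
    1 + ∑ j ∈ Finset.Icc 1 k, Nat.choose (g + j) j = T k (g + 1) := by
  induction k with
  | zero => simp [T]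
  | succ k ih =>
    rw [Finset.sum_Icc_succ_top (by omega : 1 ≤ k + 1)]
    have hT : T (k + 1) (g + 1) = Nat.choose (g + k + 1 + 1) (k + 1) := by
      have h1 : g + 1 + (k + 1) = g + k + 1 + 1 := by omega
      simp only [T, h1]
    have hT' : T k (g + 1) = Nat.choose (g + k + 1) k := by
      have h1 : g + 1 + k = g + k + 1 := by omega
      simp only [T, h1]
    have hp : Nat.choose (g + k + 1 + 1) (k + 1)
        = Nat.choose (g + k + 1) k + Nat.choose (g + k + 1) (k + 1) := by
      rw [Nat.choose_succ_succ]
    have harg : g + (k + 1) = g + k + 1 := by omega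
    rw [harg, hT, hp, ← hT']
    omega

lemma repEval : ∀ n p f h, _root_.IsBinRep n h p f → U n h = _root_.upVal n p f := by
  intro n
  induction n with
  | zero =>
    intro p f h hrep
    exact absurd hrep.2.1 (by have := hrep.1; omega)
  | succ n ih =>
    intro p f h hrep
    obtain ⟨hp1, hpn, hmono, hsum⟩ := hrep
    by_cases hpn' : p = n + 1
    · subst hpn'
      rw [Finset.Icc_self, Finset.sum_singleton] at hsum
      have hhT : h = T (n + 1) (f (n + 1)) := hsum
      have hU : U (n + 1) h = T (n + 1) (f (n + 1) + 1) := by rw [hhT]; exact U_T _ _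
      have hup : _root_.upVal (n + 1) (n + 1) f = Nat.choose (f (n + 1) + (n + 1) + 1) (n + 1) := by
        unfold _root_.upVal
        rw [Finset.Icc_self, Finset.sum_singleton]
      have harg : f (n + 1) + 1 + (n + 1) = f (n + 1) + (n + 1) + 1 := by omega
      rw [hU, hup]
      simp only [T, harg]
    · have hpn2 : p ≤ n := by omega
      have hsplit : ∑ j ∈ Finset.Icc p (n + 1), Nat.choose (f j + j) j
          = (∑ j ∈ Finset.Icc p n, Nat.choose (f j + j) j)
            + Nat.choose (f (n + 1) + (n + 1)) (n + 1) :=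
        Finset.sum_Icc_succ_top (by omega) _
      set h' := ∑ j ∈ Finset.Icc p n, Nat.choose (f j + j) j with hh'
      have hrep' : _root_.IsBinRep n h' p f :=
        ⟨hp1, hpn2, fun j k hj hk hkn => hmono j k hj hk (by omega), rfl⟩
      have hih := ih p f h' hrep'
      have hb2 : h' ≤ ∑ j ∈ Finset.Icc p n, Nat.choose (f (n + 1) + j) j := by
        apply Finset.sum_le_sum
        intro j hj
        rw [Finset.mem_Icc] at hj
        exact Nat.choose_le_choose j
          (by have := hmono j (n + 1) hj.1 (by omega) (le_refl _); omega)
      have hb3 : ∑ j ∈ Finset.Icc p n, Nat.choose (f (n + 1) + j) j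
          ≤ ∑ j ∈ Finset.Icc 1 n, Nat.choose (f (n + 1) + j) j :=
        Finset.sum_le_sum_of_subset (Finset.Icc_subset_Icc (by omega) (le_refl _))
      have hb4 := sum_choose (f (n + 1)) n
      have hbound : h' < T n (f (n + 1) + 1) := by omega
      have hTs : T (n + 1) (f (n + 1) + 1)
          = T (n + 1) (f (n + 1)) + T n (f (n + 1) + 1) := T_succ n (f (n + 1))
      have hblk : T (n + 1) (f (n + 1)) + h' < T (n + 1) (f (n + 1) + 1) := by omega
      have hU : U (n + 1) (T (n + 1) (f (n + 1)) + h') = T (n + 1) (f (n + 1) + 1) + U n h' :=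
        U_succ_block hblk
      have hTdef : T (n + 1) (f (n + 1)) = Nat.choose (f (n + 1) + (n + 1)) (n + 1) := rfl
      have hfin : h = T (n + 1) (f (n + 1)) + h' := by
        rw [hsum, hsplit, hTdef]; omega
      have hup : _root_.upVal (n + 1) p f = _root_.upVal n p f + Nat.choose (f (n + 1) + (n + 1) + 1) (n + 1) := by
        unfold _root_.upVal
        exact Finset.sum_Icc_succ_top (by omega) _
      have hTdef2 : T (n + 1) (f (n + 1) + 1) = Nat.choose (f (n + 1) + (n + 1) + 1) (n + 1) := by
        have harg : f (n + 1) + 1 + (n + 1) = f (n + 1) + (n + 1) + 1 := by omega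
        simp only [T, harg]
      rw [hfin, hU, hup, hih, hTdef2]
      omega

lemma main_ineq {n a b : ℕ} (hn : 0 < n) (ha : 0 < a) (hb : 0 < b)
    {p q r : ℕ} {f g k : ℕ → ℕ}
    (hra : _root_.IsBinRep n a p f) (hrb : _root_.IsBinRep n b q g) (hrc : _root_.IsBinRep n (a + b) r k) :
    _root_.upVal n r k < _root_.upVal n p f + _root_.upVal n q g := by
  have hA := PA_all hn a b ha hb
  have e1 := repEval n p f a hra
  have e2 := repEval n q g b hrb
  have e3 := repEval n r k (a + b) hrc
  omega

end BinRepAux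

/-- `a^{<n>} + b^{<n>} > (a+b)^{<n>}` for positive integers `a, b, n`. -/
theorem upVal_add_lt (n a b pa pb pc : ℕ) (fa fb fc : ℕ → ℕ)
    (hn : 0 < n) (ha : 0 < a) (hb : 0 < b)
    (hra : IsBinRep n a pa fa) (hrb : IsBinRep n b pb fb)
    (hrc : IsBinRep n (a + b) pc fc) :
    upVal n pc fc < upVal n pa fa + upVal n pb fb :=
  BinRepAux.main_ineq hn ha hb hra hrb hrc
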